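/- Let d ≥ 2, a ∈ ℂ, α, δ ∈ ℂ*. Consider the 1-form ω = α(y − ax)^d dx + δ x^d (x dy − y dx), with coefficient polynomials ω_x = α(y−ax)^d − δ x^d y and ω_y = δ x^{d+1}. Under the linear substitution φ(x,y) = ((α/δ)x, (α/δ)(y + ax)), the pullback φ*ω equals (α^{d+2}/δ^{d+1}) · ω̄ where ω̄ = y^d dx + x^d(x dy − y dx), i.e. the following two polynomial identities hold: ω_x(φ(x,y))·(α/δ) + ω_y(φ(x,y))·(α/δ)·a = (α^{d+2}/δ^{d+1})·(y^d − x^d y) and ω_y(φ(x,y))·(α/δ) = (α^{d+2}/δ^{d+1})·x^{d+1}. -/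

import Mathlib

open MvPolynomial

theorem stmt_5 (d : ℕ) (hd : 2 ≤ d) (a α δ : ℂ) (hα : α ≠ 0) (hδ : δ ≠ 0)
    (ωx ωy : MvPolynomial (Fin 2) ℂ)
    (hωx : ωx = C α * (X 1 - C a * X 0) ^ d - C δ * (X 0) ^ d * X 1)
    (hωy : ωy = C δ * (X 0) ^ (d + 1))
    (φ : MvPolynomial (Fin 2) ℂ →ₐ[ℂ] MvPolynomial (Fin 2) ℂ)
    (hφ : φ = aeval ![C (α / δ) * X 0, C (α / δ) * (X 1 + C a * X 0)]) :
    φ ωx * C (α / δ) + φ ωy * C (α / δ) * C a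
        = C (α ^ (d + 2) / δ ^ (d + 1)) * ((X 1) ^ d - (X 0) ^ d * X 1) ∧
    φ ωy * C (α / δ) = C (α ^ (d + 2) / δ ^ (d + 1)) * (X 0) ^ (d + 1) := by
  set β : ℂ := α / δ with hβdef
  have hα' : α = δ * β := by rw [hβdef]; field_simp
  have hconst : α ^ (d + 2) / δ ^ (d + 1) = δ * β ^ (d + 2) := by
    rw [hα']; field_simp; ring
  have hCα : (C α : MvPolynomial (Fin 2) ℂ) = C δ * C β := by
    rw [hα', map_mul]
  have hCconst : (C (α ^ (d + 2) / δ ^ (d + 1)) : MvPolynomial (Fin 2) ℂ)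
      = C δ * (C β) ^ (d + 2) := by
    rw [hconst, map_mul, map_pow]
  subst hωx hωy hφ
  simp only [map_sub, map_mul, map_pow, map_add, aeval_X, aeval_C, algebraMap_eq,
    Matrix.cons_val_zero, Matrix.cons_val_one, Matrix.head_cons, hCα, hCconst]
  constructor <;> ring
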